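/- Let d ≥ 1, Δt > 0, a, b ∈ ℝ^d regarded inside ℂ^d, u, v ∈ ℂ and p, q ∈ ℂ^d. Set X = i·p + u·a, Y = i·q + v·a and Z = i·q + v·b, and let ⟨·,·⟩ and ‖·‖ be the complex inner product and norm on ℂ^d. Then Re⟨ (X+Y)/2 , (X−Y)/Δt ⟩ = (1/(2Δt))( ‖X‖² − ‖Z‖² ) − |v|²·((a+b)/2)·((a−b)/Δt) − F·((a−b)/Δt), where F = (i/2)( conj(v)·q − v·conj(q) ) ∈ ℂ^d has real components, the dot products are Σ_j of componentwise products, and the right-hand side is real. -/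

import Mathlib

open Complex ComplexConjugate

/-- Pointwise form of the discrete magnetic energy identity (3.11):
with `X = i·p + u·a`, `Y = i·q + v·a`, `Z = i·q + v·b`,
`Re⟨(X+Y)/2, (X−Y)/Δt⟩ = (1/(2Δt))(‖X‖² − ‖Z‖²) − |v|²·((a+b)/2)·((a−b)/Δt) − F·((a−b)/Δt)`,
where `F = (i/2)(conj(v)·q − v·conj(q))`. -/
lemma aux7 (Δt : ℝ) (hΔt : Δt ≠ 0) (a b : ℝ) (u v p q : ℂ) :
    ((((Complex.I * p + u * a + (Complex.I * q + v * a)) / 2) *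
        conj ((Complex.I * p + u * a - (Complex.I * q + v * a)) / (Δt : ℂ))).re : ℂ)
      = ((1 / (2 * Δt) * (Complex.normSq (Complex.I * p + u * a)
            - Complex.normSq (Complex.I * q + v * b)) : ℝ) : ℂ)
        - ((Complex.normSq v : ℝ) : ℂ) * (((a + b) / 2 * ((a - b) / Δt) : ℝ) : ℂ)
        - ((Complex.I / 2) * (conj v * q - v * conj q)) * (((a - b) / Δt : ℝ) : ℂ) := by
  have hre : ∀ z : ℂ, (z.re : ℂ) = (z + conj z) / 2 := by
    intro z
    rw [Complex.add_conj]
    push_cast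
    ring
  have hns : ∀ z : ℂ, ((Complex.normSq z : ℝ) : ℂ) = z * conj z := by
    intro z; rw [Complex.mul_conj]
  have hΔt' : (Δt : ℂ) ≠ 0 := Complex.ofReal_ne_zero.mpr hΔt
  rw [hre]
  push_cast
  simp only [hns]
  simp only [map_add, map_mul, map_sub, map_div₀, Complex.conj_ofReal, Complex.conj_I,
    Complex.conj_conj, map_ofNat]
  field_simp
  simp only [map_neg, Complex.conj_I, neg_neg]
  ring

theorem stmt7 (d : ℕ) (hd : 1 ≤ d) (Δt : ℝ) (hΔt : 0 < Δt)
    (a b : Fin d → ℝ) (u v : ℂ) (p q : Fin d → ℂ)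
    (X Y Z : Fin d → ℂ)
    (hX : X = fun j => Complex.I * p j + u * (a j : ℂ))
    (hY : Y = fun j => Complex.I * q j + v * (a j : ℂ))
    (hZ : Z = fun j => Complex.I * q j + v * (b j : ℂ)) :
    (((∑ j, ((X j + Y j) / 2) * conj ((X j - Y j) / (Δt : ℂ))).re : ℝ) : ℂ)
      = ((1 / (2 * Δt) * ((∑ j, Complex.normSq (X j)) - ∑ j, Complex.normSq (Z j)) : ℝ) : ℂ)
        - ((Complex.normSq v : ℝ) : ℂ)
            * ((∑ j, ((a j + b j) / 2) * ((a j - b j) / Δt) : ℝ) : ℂ)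
        - ∑ j, ((Complex.I / 2) * (conj v * q j - v * conj (q j)))
            * (((a j - b j) / Δt : ℝ) : ℂ) := by
  subst hX hY hZ
  have key := fun j : Fin d => aux7 Δt (ne_of_gt hΔt) (a j) (b j) u v (p j) (q j)
  have lhs : (((∑ j, (((fun j => Complex.I * p j + u * (a j : ℂ)) j
        + (fun j => Complex.I * q j + v * (a j : ℂ)) j) / 2) *
        conj (((fun j => Complex.I * p j + u * (a j : ℂ)) j
        - (fun j => Complex.I * q j + v * (a j : ℂ)) j) / (Δt : ℂ))).re : ℝ) : ℂ)
      = ∑ j, ((((Complex.I * p j + u * (a j : ℂ) + (Complex.I * q j + v * (a j : ℂ))) / 2) *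
        conj ((Complex.I * p j + u * (a j : ℂ) - (Complex.I * q j + v * (a j : ℂ))) / (Δt : ℂ))).re : ℂ) := by
    push_cast [Complex.re_sum]
    rfl
  rw [lhs, Finset.sum_congr rfl (fun j _ => key j)]
  push_cast [Finset.sum_sub_distrib, Finset.mul_sum]
  rw [← Finset.mul_sum, Finset.sum_sub_distrib]
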